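/- For any x ∈ [n]^n with weakly increasing rearrangement x', if there exists an index i with x'_i > i, then at least one car fails to park under the parking process applied to x. -/

import Mathlib

/-- Car with preference `p` parks in the first unoccupied spot among `p, p+1, ..., n`,
if any. -/
def parkOne (n : ℕ) (occ : Finset ℕ) (p : ℕ) : Option ℕ :=
  (List.range' p (n + 1 - p)).find? (fun s => s ∉ occ)

/-- Run the parking process for all cars, returning the list of spots where the cars
park (in order of arrival), or `none` if some car fails to park. -/
def parkAll (n : ℕ) : List ℕ → Finset ℕ → Option (List ℕ)
  | [], _ => some []
  | p :: ps, occ =>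
    match parkOne n occ p with
    | none => none
    | some s => (parkAll n ps (insert s occ)).map (s :: ·)

lemma parkOne_spec {n : ℕ} {occ : Finset ℕ} {p s : ℕ} (h : parkOne n occ p = some s) :
    p ≤ s ∧ s ≤ n ∧ s ∉ occ := by
  unfold parkOne at h
  have h1 := List.find?_some h
  have h2 := List.mem_of_find?_eq_some h
  rw [List.mem_range'] at h2
  obtain ⟨i, hi, rfl⟩ := h2
  refine ⟨Nat.le_add_right _ _, by omega, by simpa using h1⟩

lemma parkAll_spec (n : ℕ) : ∀ (ps : List ℕ) (occ : Finset ℕ) (l : List ℕ),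
    parkAll n ps occ = some l →
    List.Forall₂ (fun p s => p ≤ s ∧ s ≤ n) ps l ∧ l.Nodup ∧ ∀ s ∈ l, s ∉ occ := by
  intro ps
  induction ps with
  | nil => intro occ l h; simp [parkAll] at h; subst h; simp
  | cons p ps ih =>
    intro occ l h
    unfold parkAll at h
    cases hp : parkOne n occ p with
    | none => rw [hp] at h; simp at h
    | some s =>
      rw [hp] at h
      dsimp only at h
      cases hrec : parkAll n ps (insert s occ) with
      | none => rw [hrec] at h; simp at h
      | some l' =>
        rw [hrec] at h
        simp only [Option.map_some] at h
        obtain rfl : s :: l' = l := by injection h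
        obtain ⟨hf, hnd, hocc⟩ := ih _ _ hrec
        obtain ⟨hps, hsn, hso⟩ := parkOne_spec hp
        refine ⟨List.Forall₂.cons ⟨hps, hsn⟩ hf, ?_, ?_⟩
        · refine List.nodup_cons.mpr ⟨fun hs => ?_, hnd⟩
          exact hocc s hs (Finset.mem_insert_self s occ)
        · intro t ht
          rcases List.mem_cons.mp ht with rfl | ht
          · exact hso
          · intro htocc; exact hocc t ht (Finset.mem_insert_of_mem htocc)

lemma countP_mono_forall₂ (k : ℕ) {x l : List ℕ}
    (h : List.Forall₂ (fun p s : ℕ => p ≤ s) x l) :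
    l.countP (fun s => decide (s ≤ k)) ≤ x.countP (fun p => decide (p ≤ k)) := by
  induction h with
  | nil => simp
  | @cons a b l1 l2 hps htail ih =>
    rw [List.countP_cons, List.countP_cons]
    by_cases h1 : b ≤ k <;> by_cases h2 : a ≤ k <;> simp [h1, h2] <;> omega

theorem not_parkingFunction_of_sorted_gt (n : ℕ) (x : List ℕ)
    (hlen : x.length = n) (hx : ∀ a ∈ x, 1 ≤ a ∧ a ≤ n)
    (h : ∃ i < n, i + 1 < (x.mergeSort (fun a b => a ≤ b)).getD i 0) :
    parkAll n x ∅ = none := by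
  by_contra hc
  obtain ⟨l, hl⟩ := Option.ne_none_iff_exists'.mp hc
  obtain ⟨hf, hnd, -⟩ := parkAll_spec n x ∅ l hl
  obtain ⟨i, hi, hgt⟩ := h
  set y := x.mergeSort (fun a b => a ≤ b) with hy
  have hperm : y.Perm x := List.mergeSort_perm x _
  have hylen : y.length = n := by rw [hperm.length_eq, hlen]
  have hsorted : y.Pairwise (· ≤ ·) := by
    have := List.pairwise_mergeSort (le := fun a b : ℕ => decide (a ≤ b))
      (fun a b c => by simpa using Nat.le_trans) (fun a b => by simpa using Nat.le_total a b) x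
    simpa [hy] using this.imp (fun h => by simpa using h)
  set k := i + 1 with hk
  -- count of elements ≤ k in x is at most i
  have hcx : x.countP (fun p => decide (p ≤ k)) ≤ i := by
    have : y.countP (fun p => decide (p ≤ k)) ≤ i := by
      have hsplit : y = y.take i ++ y.drop i := (List.take_append_drop i y).symm
      rw [hsplit, List.countP_append]
      have h1 : (y.take i).countP (fun p => decide (p ≤ k)) ≤ i := by
        calc (y.take i).countP _ ≤ (y.take i).length := List.countP_le_length
        _ ≤ i := by simp
      have h2 : (y.drop i).countP (fun p => decide (p ≤ k)) = 0 := by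
        rw [List.countP_eq_zero]
        intro a ha
        have hmem : k < a := by
          have hiy : i < y.length := by omega
          have hdrop : y.drop i = y.get ⟨i, hiy⟩ :: y.drop (i + 1) := by
            rw [List.drop_eq_getElem_cons hiy]; rfl
          have hgety : k < y.get ⟨i, hiy⟩ := by
            have : y.getD i 0 = y.get ⟨i, hiy⟩ := List.getD_eq_getElem y 0 hiy
            rw [this] at hgt; exact hgt
          rw [hdrop] at ha
          rcases List.mem_cons.mp ha with rfl | ha
          · exact hgety
          · have hs : List.Pairwise (· ≤ ·) (y.get ⟨i, hiy⟩ :: y.drop (i+1)) := by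
              rw [← hdrop]; exact hsorted.drop
            exact lt_of_lt_of_le hgety ((List.pairwise_cons.mp hs).1 a ha)
        simp; omega
      omega
    calc x.countP _ = y.countP _ := (hperm.countP_eq _).symm
    _ ≤ i := this
  -- l's toFinset is Icc 1 n
  have hllen : l.length = n := by rw [← hf.length_eq, hlen]
  have hsub : l.toFinset ⊆ Finset.Icc 1 n := by
    intro s hs
    rw [List.mem_toFinset] at hs
    obtain ⟨p, hpx, hps, hsn⟩ : ∃ p ∈ x, p ≤ s ∧ s ≤ n := by
      obtain ⟨j, hjs⟩ := List.mem_iff_get.mp hs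
      have hlen2 := hf.length_eq
      have hrel := (List.forall₂_iff_get.mp hf).2 j (by omega) j.2
      refine ⟨x.get ⟨j, by omega⟩, List.get_mem _ _, ?_, ?_⟩ <;>
        simp_all
    have := (hx p hpx).1
    rw [Finset.mem_Icc]; omega
  have hcard : l.toFinset.card = n := by
    rw [List.toFinset_card_of_nodup hnd, hllen]
  have htf : l.toFinset = Finset.Icc 1 n := by
    apply Finset.eq_of_subset_of_card_le hsub
    rw [hcard]; simp
  -- count of elements ≤ k in l is at least k
  have hcl : k ≤ l.countP (fun s => decide (s ≤ k)) := by
    have hfilter : Finset.Icc 1 k ⊆ (l.filter (fun s => decide (s ≤ k))).toFinset := by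
      intro a ha
      rw [Finset.mem_Icc] at ha
      rw [List.toFinset_filter, Finset.mem_filter, htf, Finset.mem_Icc]
      constructor
      · constructor <;> omega
      · simp; omega
    have h1 : (Finset.Icc 1 k).card ≤ (l.filter (fun s => decide (s ≤ k))).toFinset.card :=
      Finset.card_le_card hfilter
    have h2 : (l.filter (fun s => decide (s ≤ k))).toFinset.card
        = (l.filter (fun s => decide (s ≤ k))).length :=
      List.toFinset_card_of_nodup (hnd.filter _)
    rw [h2] at h1
    simpa [List.countP_eq_length_filter] using h1
  have hmono := countP_mono_forall₂ k (hf.imp (fun _ _ h => h.1))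
  omega
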